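/- Let V be a finite set with n elements, let f : P(V) → [0, ∞) be a monotone submodular function with f(∅) = 0, let k ∈ {1, …, n}, and let ε ∈ (0, 1). Consider the stochastic greedy algorithm with sample size s = ⌈(n/k)·log(1/ε)⌉: starting from S₀ = ∅, at each step l = 1, …, k a set R_l of s elements is drawn uniformly at random from V \ S_{l−1}, and S_l = S_{l−1} ∪ {v_l} where v_l ∈ R_l maximizes Δ(f, v | S_{l−1}) over v ∈ R_l. Let S_k be the (random) output after k steps. Then the expected value satisfies E[f(S_k)] ≥ (1 − 1/e − ε) · max{ f(S) : S ⊆ V, |S| = k }. -/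

import Mathlib

/-- The distribution of the set held by the stochastic greedy algorithm after
`l` steps.  Starting from `S₀ = ∅`, at each step a sample `R` of `s` elements
(all of the remaining elements if fewer than `s` remain) is drawn uniformly at
random, without replacement, from `V \ S`, independently across steps, and the
element of `R` selected by `sel R S` (intended: a maximizer of the marginal
gain `v ↦ f (insert v S) - f S` over `v ∈ R`, ties broken arbitrarily) is
added to the current set `S`. -/
noncomputable def stochasticGreedy {V : Type*} [Fintype V] [DecidableEq V]
    (sel : Finset V → Finset V → V) (s : ℕ) : ℕ → PMF (Finset V)
  | 0 => PMF.pure ∅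
  | l + 1 =>
    (stochasticGreedy sel s l).bind fun S =>
      (PMF.uniformOfFinset
          (Finset.powersetCard (min s ((Finset.univ : Finset V) \ S).card)
            ((Finset.univ : Finset V) \ S))
          (Finset.powersetCard_nonempty.mpr (min_le_right _ _))).map
        fun R => insert (sel R S) S


lemma exp_chord {x a b : ℝ} (h0 : 0 ≤ x) (h1 : x ≤ 1) :
    Real.exp ((1 - x) * a + x * b) ≤ (1 - x) * Real.exp a + x * Real.exp b :=
  convexOn_exp.2 (Set.mem_univ a) (Set.mem_univ b) (by linarith) h0 (by ring)

lemma exp_eps_sub_one {ε : ℝ} (h0 : 0 ≤ ε) (h1 : ε ≤ 1) :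
    Real.exp (ε - 1) ≤ (Real.exp 1)⁻¹ + ε := by
  have := exp_chord (a := -1) (b := 0) h0 h1
  rw [Real.exp_zero] at this
  calc Real.exp (ε - 1) = Real.exp ((1-ε)*(-1) + ε*0) := by ring_nf
    _ ≤ (1-ε) * Real.exp (-1) + ε * 1 := this
    _ ≤ (Real.exp 1)⁻¹ + ε := by
        rw [← Real.exp_neg]
        nlinarith [Real.exp_pos (-1 : ℝ)]

lemma exp_mul_log_le {ε x : ℝ} (hε : 0 < ε) (h0 : 0 ≤ x) (h1 : x ≤ 1) :
    Real.exp (x * Real.log ε) ≤ 1 - (1 - ε) * x := by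
  have := exp_chord (a := 0) (b := Real.log ε) h0 h1
  rw [Real.exp_zero, Real.exp_log hε] at this
  calc Real.exp (x * Real.log ε) = Real.exp ((1-x)*0 + x * Real.log ε) := by ring_nf
    _ ≤ (1-x) * 1 + x * ε := this
    _ = 1 - (1-ε)*x := by ring

lemma df_ineq (N d : ℕ) : ∀ m : ℕ,
    (N - d).descFactorial m * N ^ m ≤ N.descFactorial m * (N - d) ^ m := by
  intro m
  induction m with
  | zero => simp
  | succ m ih =>
    rw [Nat.descFactorial_succ, Nat.descFactorial_succ, pow_succ, pow_succ]
    have key : (N - d - m) * N ≤ (N - m) * (N - d) := by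
      rcases Nat.le_total N (d + m) with h | h
      · have : N - d - m = 0 := by omega
        simp [this]
      · have h1 : N - d - m = N - d - m := rfl
        -- N = d + m + r
        obtain ⟨r, hr⟩ : ∃ r, N = d + m + r := ⟨N - d - m, by omega⟩
        subst hr
        have e1 : d + m + r - d - m = r := by omega
        have e2 : d + m + r - m = d + r := by omega
        have e3 : d + m + r - d = m + r := by omega
        rw [e1, e2, e3]
        nlinarith
    calc (N - d - m) * (N - d).descFactorial m * (N ^ m * N)
        = ((N - d).descFactorial m * N ^ m) * ((N - d - m) * N) := by ring
      _ ≤ (N.descFactorial m * (N - d) ^ m) * ((N - m) * (N - d)) :=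
          Nat.mul_le_mul ih key
      _ = (N - m) * N.descFactorial m * ((N - d) ^ m * (N - d)) := by ring


lemma choose_cast_ineq (N d m : ℕ) :
    ((N - d).choose m : ℝ) * (N:ℝ) ^ m ≤ (N.choose m : ℝ) * ((N - d : ℕ) : ℝ) ^ m := by
  have h := df_ineq N d m
  rw [Nat.descFactorial_eq_factorial_mul_choose, Nat.descFactorial_eq_factorial_mul_choose] at h
  have h' : ((Nat.factorial m * (N - d).choose m * N ^ m : ℕ) : ℝ) ≤ ((Nat.factorial m * N.choose m * (N - d) ^ m : ℕ) : ℝ) := by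
    exact_mod_cast h
  push_cast at h'
  have hf : (0:ℝ) < Nat.factorial m := by exact_mod_cast (Nat.factorial_pos m)
  nlinarith

open Finset in
lemma fiber_card {V : Type*} [DecidableEq V] (W D T : Finset V) (hD : D ⊆ W) (hT : T ⊆ D)
    (m : ℕ) (ht : T.card ≤ m) :
    ((Finset.powersetCard m W).filter (fun R => R ∩ D = T)).card
      = (W.card - D.card).choose (m - T.card) := by
  rw [← Finset.card_sdiff_of_subset hD, ← Finset.card_powersetCard (m - T.card) (W \ D)]
  refine Finset.card_bij' (fun R _ => R \ D) (fun Q _ => Q ∪ T) ?_ ?_ ?_ ?_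
  · intro R hR
    simp only [Finset.mem_filter, Finset.mem_powersetCard] at hR
    obtain ⟨⟨hRW, hRc⟩, hRD⟩ := hR
    simp only [Finset.mem_powersetCard]
    constructor
    · exact Finset.sdiff_subset_sdiff hRW (Finset.Subset.refl D)
    · have := Finset.card_inter_add_card_sdiff R D
      rw [hRD] at this
      omega
  · intro Q hQ
    simp only [Finset.mem_powersetCard] at hQ
    obtain ⟨hQW, hQc⟩ := hQ
    have hQD : Disjoint Q D := Finset.disjoint_of_subset_left hQW Finset.sdiff_disjoint
    simp only [Finset.mem_filter, Finset.mem_powersetCard]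
    refine ⟨⟨Finset.union_subset (hQW.trans Finset.sdiff_subset) (hT.trans hD), ?_⟩, ?_⟩
    · rw [Finset.card_union_of_disjoint (Finset.disjoint_of_subset_right hT hQD)]
      omega
    · rw [Finset.union_inter_distrib_right, Finset.inter_eq_left.2 hT,
        (Finset.disjoint_iff_inter_eq_empty.1 hQD), Finset.empty_union]
  · intro R hR
    simp only [Finset.mem_filter, Finset.mem_powersetCard] at hR
    show R \ D ∪ T = R
    rw [← hR.2]
    exact Finset.sdiff_union_inter R D
  · intro Q hQ
    simp only [Finset.mem_powersetCard] at hQ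
    have hQD : Disjoint Q D := Finset.disjoint_of_subset_left hQ.1 Finset.sdiff_disjoint
    show (Q ∪ T) \ D = Q
    rw [Finset.union_sdiff_distrib, Finset.sdiff_eq_self_of_disjoint hQD,
      Finset.sdiff_eq_empty_iff_subset.2 hT, Finset.union_empty]

open Finset in
lemma mem_count {V : Type*} [DecidableEq V] (D : Finset V) (u : V) (hu : u ∈ D) (t : ℕ)
    (ht : 1 ≤ t) :
    ((Finset.powersetCard t D).filter (fun T => u ∈ T)).card
      = (D.card - 1).choose (t - 1) := by
  rw [← Finset.card_erase_of_mem hu, ← Finset.card_powersetCard (t - 1) (D.erase u)]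
  refine Finset.card_bij' (fun T _ => T.erase u) (fun Q _ => insert u Q) ?_ ?_ ?_ ?_
  · intro T hT
    simp only [Finset.mem_filter, Finset.mem_powersetCard] at hT
    show T.erase u ∈ Finset.powersetCard (t-1) (D.erase u)
    simp only [Finset.mem_powersetCard]
    exact ⟨Finset.erase_subset_erase u hT.1.1,
      by rw [Finset.card_erase_of_mem hT.2, hT.1.2]⟩
  · intro Q hQ
    simp only [Finset.mem_powersetCard] at hQ
    have huQ : u ∉ Q := fun h => Finset.notMem_erase u D (hQ.1 h)
    show insert u Q ∈ Finset.filter (fun T => u ∈ T) (Finset.powersetCard t D)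
    simp only [Finset.mem_filter, Finset.mem_powersetCard]
    refine ⟨⟨Finset.insert_subset hu (hQ.1.trans (Finset.erase_subset u D)), ?_⟩,
      Finset.mem_insert_self u Q⟩
    rw [Finset.card_insert_of_notMem huQ, hQ.2]
    omega
  · intro T hT
    simp only [Finset.mem_filter] at hT
    show insert u (T.erase u) = T
    exact Finset.insert_erase hT.2
  · intro Q hQ
    simp only [Finset.mem_powersetCard] at hQ
    have huQ : u ∉ Q := fun h => Finset.notMem_erase u D (hQ.1 h)
    show (insert u Q).erase u = Q
    exact Finset.erase_insert huQ

lemma sum_powersetCard_sum {V : Type*} [DecidableEq V] (D : Finset V) (Δ : V → ℝ)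
    (t : ℕ) (ht : 1 ≤ t) :
    ∑ T ∈ Finset.powersetCard t D, ∑ u ∈ T, Δ u
      = ((D.card - 1).choose (t - 1) : ℝ) * ∑ u ∈ D, Δ u := by
  have key : ∀ T ∈ Finset.powersetCard t D, ∑ u ∈ T, Δ u
      = ∑ u ∈ D, if u ∈ T then Δ u else 0 := by
    intro T hT
    rw [Finset.sum_ite_mem, Finset.inter_comm,
      Finset.inter_eq_left.2 (Finset.mem_powersetCard.1 hT).1]
  rw [Finset.sum_congr rfl key, Finset.sum_comm, Finset.mul_sum]
  apply Finset.sum_congr rfl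
  intro u hu
  rw [← Finset.sum_filter, Finset.sum_const, nsmul_eq_mul, mem_count D u hu t ht]

open Finset in
lemma group_eq {V : Type*} [DecidableEq V] (W D : Finset V) (hD : D ⊆ W) (hd : 1 ≤ D.card)
    (m t : ℕ) (ht : 1 ≤ t) (Δ : V → ℝ) :
    ∑ T ∈ powersetCard t D,
        ((((powersetCard m W).filter (fun R => R ∩ D = T)).card : ℝ)
          * ((T.card : ℝ)⁻¹ * ∑ u ∈ T, Δ u))
      = (∑ T ∈ powersetCard t D,
          (((powersetCard m W).filter (fun R => R ∩ D = T)).card : ℝ))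
          * ((D.card : ℝ)⁻¹ * ∑ u ∈ D, Δ u) := by
  by_cases htm : t ≤ m
  · have hcval : ∀ T ∈ powersetCard t D,
        (((powersetCard m W).filter (fun R => R ∩ D = T)).card : ℝ)
          = ((W.card - D.card).choose (m - t) : ℝ) := by
      intro T hT
      rw [mem_powersetCard] at hT
      rw [fiber_card W D T hD hT.1 m (hT.2 ▸ htm), hT.2]
    have hFval : ∀ T ∈ powersetCard t D,
        (((powersetCard m W).filter (fun R => R ∩ D = T)).card : ℝ)
          * ((T.card : ℝ)⁻¹ * ∑ u ∈ T, Δ u)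
        = ((W.card - D.card).choose (m - t) : ℝ) * ((t : ℝ)⁻¹ * ∑ u ∈ T, Δ u) := by
      intro T hT
      rw [hcval T hT, (mem_powersetCard.1 hT).2]
    rw [Finset.sum_congr rfl hFval, Finset.sum_congr rfl hcval, Finset.sum_const,
      Finset.card_powersetCard, ← Finset.mul_sum, ← Finset.mul_sum,
      sum_powersetCard_sum D Δ t ht, nsmul_eq_mul]
    have hbinom : (D.card : ℕ) * ((D.card - 1).choose (t-1)) = t * (D.card.choose t) := by
      obtain ⟨d', hd'⟩ : ∃ d', D.card = d' + 1 := ⟨D.card - 1, by omega⟩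
      obtain ⟨t', ht'⟩ : ∃ t', t = t' + 1 := ⟨t - 1, by omega⟩
      rw [hd', ht']
      simpa [Nat.mul_comm] using Nat.add_one_mul_choose_eq d' t'
    have hbinomR : (D.card : ℝ) * (((D.card - 1).choose (t-1)) : ℝ)
        = (t : ℝ) * ((D.card.choose t) : ℝ) := by exact_mod_cast hbinom
    have htpos : (0:ℝ) < t := by exact_mod_cast ht
    have hdpos : (0:ℝ) < D.card := by exact_mod_cast hd
    set γ := ((W.card - D.card).choose (m - t) : ℝ)
    set A := ∑ u ∈ D, Δ u
    field_simp
    linear_combination γ * A * hbinomR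
  · have hcval : ∀ T ∈ powersetCard t D,
        (((powersetCard m W).filter (fun R => R ∩ D = T)).card : ℝ) = 0 := by
      intro T hT
      rw [mem_powersetCard] at hT
      norm_cast
      rw [Finset.card_eq_zero, Finset.filter_eq_empty_iff]
      intro R hR
      rw [mem_powersetCard] at hR
      intro hRD
      have : T.card ≤ R.card := Finset.card_le_card (hRD ▸ inter_subset_left)
      omega
    rw [Finset.sum_congr rfl (fun T hT => by rw [hcval T hT, zero_mul]),
      Finset.sum_congr rfl hcval]
    simp

open Finset in
lemma avg_eq {V : Type*} [DecidableEq V] (W D : Finset V) (hD : D ⊆ W) (hd : 1 ≤ D.card)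
    (m : ℕ) (Δ : V → ℝ) :
    ∑ R ∈ (powersetCard m W).filter (fun R => (R ∩ D).Nonempty),
        (((R ∩ D).card : ℝ)⁻¹ * ∑ u ∈ R ∩ D, Δ u)
      = ((((powersetCard m W).filter (fun R => (R ∩ D).Nonempty)).card : ℝ))
          * ((D.card : ℝ)⁻¹ * ∑ u ∈ D, Δ u) := by
  classical
  have hmaps : ∀ R ∈ (powersetCard m W).filter (fun R => (R ∩ D).Nonempty),
      R ∩ D ∈ D.powerset.filter Finset.Nonempty := by
    intro R hR
    rw [mem_filter] at hR
    rw [mem_filter, mem_powerset]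
    exact ⟨inter_subset_right, hR.2⟩
  have hfib : ∀ T ∈ D.powerset.filter Finset.Nonempty,
      ((powersetCard m W).filter (fun R => (R ∩ D).Nonempty)).filter (fun R => R ∩ D = T)
        = (powersetCard m W).filter (fun R => R ∩ D = T) := by
    intro T hT
    rw [mem_filter] at hT
    ext R
    simp only [mem_filter, and_assoc]
    constructor
    · rintro ⟨h1, _, h3⟩; exact ⟨h1, h3⟩
    · rintro ⟨h1, h3⟩; exact ⟨h1, h3 ▸ hT.2, h3⟩
  have hmaps2 : ∀ T ∈ D.powerset.filter Finset.Nonempty, T.card ∈ Finset.Icc 1 D.card := by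
    intro T hT
    rw [mem_filter, mem_powerset] at hT
    rw [mem_Icc]
    exact ⟨Finset.card_pos.2 hT.2, Finset.card_le_card hT.1⟩
  have hclass : ∀ t ∈ Finset.Icc 1 D.card,
      (D.powerset.filter Finset.Nonempty).filter (fun T => T.card = t)
        = powersetCard t D := by
    intro t ht
    rw [mem_Icc] at ht
    ext T
    simp only [mem_filter, mem_powerset, mem_powersetCard, and_assoc]
    constructor
    · rintro ⟨h1, _, h3⟩; exact ⟨h1, h3⟩
    · rintro ⟨h1, h3⟩
      exact ⟨h1, Finset.card_pos.1 (by omega), h3⟩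
  calc ∑ R ∈ (powersetCard m W).filter (fun R => (R ∩ D).Nonempty),
        (((R ∩ D).card : ℝ)⁻¹ * ∑ u ∈ R ∩ D, Δ u)
      = ∑ T ∈ D.powerset.filter Finset.Nonempty,
          ∑ R ∈ ((powersetCard m W).filter (fun R => (R ∩ D).Nonempty)).filter
            (fun R => R ∩ D = T), (((R ∩ D).card : ℝ)⁻¹ * ∑ u ∈ R ∩ D, Δ u) := by
        rw [Finset.sum_fiberwise_of_maps_to hmaps]
    _ = ∑ T ∈ D.powerset.filter Finset.Nonempty,
          ((((powersetCard m W).filter (fun R => R ∩ D = T)).card : ℝ)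
            * ((T.card : ℝ)⁻¹ * ∑ u ∈ T, Δ u)) := by
        refine Finset.sum_congr rfl fun T hT => ?_
        have hcongr : ∀ R ∈ ((powersetCard m W).filter (fun R => (R ∩ D).Nonempty)).filter
            (fun R => R ∩ D = T),
            (((R ∩ D).card : ℝ)⁻¹ * ∑ u ∈ R ∩ D, Δ u)
              = ((T.card : ℝ)⁻¹ * ∑ u ∈ T, Δ u) := by
          intro R hR
          rw [(Finset.mem_filter.1 hR).2]
        rw [Finset.sum_congr rfl hcongr, Finset.sum_const, hfib T hT, nsmul_eq_mul]
    _ = ∑ t ∈ Finset.Icc 1 D.card, ∑ T ∈ (D.powerset.filter Finset.Nonempty).filter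
          (fun T => T.card = t),
          ((((powersetCard m W).filter (fun R => R ∩ D = T)).card : ℝ)
            * ((T.card : ℝ)⁻¹ * ∑ u ∈ T, Δ u)) := by
        rw [Finset.sum_fiberwise_of_maps_to hmaps2]
    _ = ∑ t ∈ Finset.Icc 1 D.card,
          (∑ T ∈ (D.powerset.filter Finset.Nonempty).filter (fun T => T.card = t),
            (((powersetCard m W).filter (fun R => R ∩ D = T)).card : ℝ))
              * ((D.card : ℝ)⁻¹ * ∑ u ∈ D, Δ u) := by
        refine Finset.sum_congr rfl fun t ht => ?_
        rw [hclass t ht]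
        exact group_eq W D hD hd m t (Finset.mem_Icc.1 ht).1 Δ
    _ = (∑ t ∈ Finset.Icc 1 D.card,
          ∑ T ∈ (D.powerset.filter Finset.Nonempty).filter (fun T => T.card = t),
            (((powersetCard m W).filter (fun R => R ∩ D = T)).card : ℝ))
              * ((D.card : ℝ)⁻¹ * ∑ u ∈ D, Δ u) := by
        rw [Finset.sum_mul]
    _ = (∑ T ∈ D.powerset.filter Finset.Nonempty,
            (((powersetCard m W).filter (fun R => R ∩ D = T)).card : ℝ))
              * ((D.card : ℝ)⁻¹ * ∑ u ∈ D, Δ u) := by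
        rw [Finset.sum_fiberwise_of_maps_to hmaps2]
    _ = ((((powersetCard m W).filter (fun R => (R ∩ D).Nonempty)).card : ℝ))
          * ((D.card : ℝ)⁻¹ * ∑ u ∈ D, Δ u) := by
        congr 1
        rw [Finset.card_eq_sum_card_fiberwise hmaps]
        push_cast
        exact Finset.sum_congr rfl fun T hT => by rw [hfib T hT]

open Finset in
lemma hit_bound {V : Type*} [DecidableEq V] (W D : Finset V) (hD : D ⊆ W) (hd : 1 ≤ D.card)
    (s k : ℕ) (hk : 1 ≤ k) (hdk : D.card ≤ k) (ε : ℝ) (hε0 : 0 < ε) (hε1 : ε < 1)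
    (hsk : (W.card : ℝ) * Real.log (1/ε) ≤ (s : ℝ) * k) :
    1 - Real.exp ((D.card : ℝ)/k * Real.log ε)
      ≤ ((((powersetCard (min s W.card) W).filter (fun R => (R ∩ D).Nonempty)).card : ℝ))
          * ((W.card.choose (min s W.card) : ℝ))⁻¹ := by
  classical
  set N := W.card with hN
  set d := D.card with hdd
  set m := min s N with hm
  have hdN : d ≤ N := Finset.card_le_card hD
  have hNpos : 0 < N := lt_of_lt_of_le hd hdN
  have hCpos : 0 < N.choose m := Nat.choose_pos (min_le_right s N)
  have hCposR : (0:ℝ) < (N.choose m : ℝ) := by exact_mod_cast hCpos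
  -- miss count
  have hmiss : ((powersetCard m W).filter (fun R => ¬ (R ∩ D).Nonempty)).card
      = (N - d).choose m := by
    have : ((powersetCard m W).filter (fun R => ¬ (R ∩ D).Nonempty))
        = ((powersetCard m W).filter (fun R => R ∩ D = ∅)) := by
      apply Finset.filter_congr
      intro R _
      simp [Finset.not_nonempty_iff_eq_empty]
    rw [this, fiber_card W D ∅ hD (Finset.empty_subset D) m (by simp)]
    simp
    rfl
  have hsplit : ((powersetCard m W).filter (fun R => (R ∩ D).Nonempty)).card
      + ((powersetCard m W).filter (fun R => ¬ (R ∩ D).Nonempty)).card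
      = N.choose m := by
    rw [Finset.card_filter_add_card_filter_not, Finset.card_powersetCard]
  -- key : miss ≤ C * exp((d/k) log ε)
  have hkey : ((N - d).choose m : ℝ) ≤ (N.choose m : ℝ)
      * Real.exp ((d : ℝ)/k * Real.log ε) := by
    have hexp_pos := Real.exp_pos ((d : ℝ)/k * Real.log ε)
    rcases le_or_gt N s with hNs | hsN
    · have hmN : m = N := min_eq_right hNs
      rw [hmN, Nat.choose_eq_zero_of_lt (by omega : N - d < N)]
      push_cast
      positivity
    · have hms : m = s := min_eq_left (le_of_lt hsN)
      rw [hms]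
      have h1 : ((N - d).choose s : ℝ) ≤ (N.choose s : ℝ) * (((N - d : ℕ) : ℝ) / N) ^ s := by
        have hci := choose_cast_ineq N d s
        have hNR : (0:ℝ) < (N:ℝ) := by exact_mod_cast hNpos
        have hpow : (0:ℝ) < (N:ℝ)^s := by positivity
        have hre : (N.choose s : ℝ) * (((N - d : ℕ) : ℝ) / N) ^ s
            = ((N.choose s : ℝ) * ((N - d : ℕ) : ℝ)^s) / (N:ℝ)^s := by
          rw [div_pow]; ring
        rw [hre, le_div_iff₀ hpow]
        linarith
      have h2 : (((N - d : ℕ) : ℝ) / N) ^ s ≤ Real.exp (-(s * (d : ℝ) / N)) := by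
        have hNR : (0:ℝ) < (N:ℝ) := by exact_mod_cast hNpos
        have hcast : ((N - d : ℕ) : ℝ) = (N : ℝ) - d := by
          push_cast [hdN]; ring
        have hbase : ((N - d : ℕ) : ℝ) / N ≤ Real.exp (-(d : ℝ)/N) := by
          rw [hcast]
          have h1e := Real.add_one_le_exp (-(d : ℝ)/N)
          calc ((N:ℝ) - d)/N = -(d:ℝ)/N + 1 := by
                rw [sub_div, div_self (ne_of_gt hNR), neg_div, sub_eq_add_neg, add_comm]
            _ ≤ Real.exp (-(d:ℝ)/N) := h1e
        have hbase0 : (0:ℝ) ≤ ((N - d : ℕ) : ℝ) / N := by positivity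
        calc (((N - d : ℕ) : ℝ) / N) ^ s ≤ (Real.exp (-(d : ℝ)/N)) ^ s :=
              pow_le_pow_left₀ hbase0 hbase s
          _ = Real.exp (-(s * (d : ℝ) / N)) := by
              rw [← Real.exp_nat_mul]
              congr 1
              ring
      have h3 : Real.exp (-(s * (d : ℝ) / N)) ≤ Real.exp ((d : ℝ)/k * Real.log ε) := by
        apply Real.exp_le_exp.2
        have hlog : Real.log ε = - Real.log (1/ε) := by
          rw [one_div, Real.log_inv]; ring
        rw [hlog]
        have hlogpos : 0 < Real.log (1/ε) := by
          apply Real.log_pos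
          rw [one_div]
          exact (one_lt_inv₀ hε0).2 hε1
        have hNR : (0:ℝ) < (N:ℝ) := by exact_mod_cast hNpos
        have hkR : (0:ℝ) < (k:ℝ) := by exact_mod_cast hk
        have hdR : (0:ℝ) < (d:ℝ) := by exact_mod_cast hd
        have hX : (d:ℝ)/k * Real.log (1/ε) ≤ (s:ℝ) * d / N := by
          rw [div_mul_eq_mul_div, div_le_div_iff₀ hkR hNR]
          nlinarith [mul_le_mul_of_nonneg_left hsk (le_of_lt hdR)]
        calc -((s:ℝ) * (d:ℝ) / N) ≤ -((d:ℝ)/k * Real.log (1/ε)) := neg_le_neg hX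
          _ = (d:ℝ)/k * -Real.log (1/ε) := by ring
      calc ((N - d).choose s : ℝ) ≤ (N.choose s : ℝ) * (((N - d : ℕ) : ℝ) / N) ^ s := h1
        _ ≤ (N.choose s : ℝ) * Real.exp (-(s * (d : ℝ) / N)) := by
            apply mul_le_mul_of_nonneg_left h2 (by positivity)
        _ ≤ (N.choose s : ℝ) * Real.exp ((d : ℝ)/k * Real.log ε) := by
            apply mul_le_mul_of_nonneg_left h3 (by positivity)
  -- conclude
  have hhit : (((powersetCard m W).filter (fun R => (R ∩ D).Nonempty)).card : ℝ)
      = (N.choose m : ℝ) - ((N - d).choose m : ℝ) := by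
    have := hsplit
    rw [hmiss] at this
    have : (((powersetCard m W).filter (fun R => (R ∩ D).Nonempty)).card : ℝ)
        + ((N - d).choose m : ℝ) = (N.choose m : ℝ) := by exact_mod_cast congrArg (Nat.cast (R := ℝ)) this
    linarith
  rw [hhit]
  rw [sub_mul, mul_inv_cancel₀ (ne_of_gt hCposR)]
  have : ((N - d).choose m : ℝ) * (N.choose m : ℝ)⁻¹ ≤ Real.exp ((d : ℝ)/k * Real.log ε) := by
    calc ((N - d).choose m : ℝ) * (N.choose m : ℝ)⁻¹
        ≤ ((N.choose m : ℝ) * Real.exp ((d : ℝ)/k * Real.log ε)) * (N.choose m : ℝ)⁻¹ :=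
          mul_le_mul_of_nonneg_right hkey (inv_nonneg.2 (le_of_lt hCposR))
      _ = Real.exp ((d : ℝ)/k * Real.log ε) := by field_simp
  linarith

lemma telescope_sub {V : Type*} [DecidableEq V] (f : Finset V → ℝ)
    (hmono : ∀ A B : Finset V, A ⊆ B → f A ≤ f B)
    (hsub : ∀ A B : Finset V, A ⊆ B → ∀ v ∉ B,
        f (insert v B) - f B ≤ f (insert v A) - f A)
    (S : Finset V) : ∀ T : Finset V,
    f (S ∪ T) ≤ f S + ∑ u ∈ T, (f (insert u S) - f S) := by
  intro T
  induction T using Finset.induction_on with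
  | empty => simp
  | @insert a T ha ih =>
    rw [Finset.sum_insert ha]
    have hterm : 0 ≤ f (insert a S) - f S :=
      sub_nonneg.2 (hmono _ _ (Finset.subset_insert a S))
    by_cases haS : a ∈ S ∪ T
    · have : S ∪ insert a T = S ∪ T := by
        rw [Finset.union_insert, Finset.insert_eq_self.2 haS]
      rw [this]
      linarith
    · have h1 : S ∪ insert a T = insert a (S ∪ T) := by rw [Finset.union_insert]
      have h2 := hsub S (S ∪ T) Finset.subset_union_left a haS
      rw [h1]
      linarith

lemma pmf_exp_bind {α β : Type*} [Fintype α] [Fintype β] (p : PMF α) (q : α → PMF β)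
    (g : β → ℝ) :
    ∑ b, ((p.bind q) b).toReal * g b
      = ∑ a, (p a).toReal * ∑ b, ((q a) b).toReal * g b := by
  have hb : ∀ b, ((p.bind q) b).toReal = ∑ a, (p a).toReal * ((q a) b).toReal := by
    intro b
    rw [PMF.bind_apply, tsum_fintype, ENNReal.toReal_sum]
    · exact Finset.sum_congr rfl fun a _ => ENNReal.toReal_mul
    · intro a _
      exact ENNReal.mul_ne_top (PMF.apply_ne_top p a) (PMF.apply_ne_top (q a) b)
  simp_rw [hb, Finset.sum_mul]
  rw [Finset.sum_comm]
  congr 1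
  ext a
  rw [Finset.mul_sum]
  congr 1
  ext b
  ring

lemma pmf_exp_pure {β : Type*} [Fintype β] [DecidableEq β] (a : β) (g : β → ℝ) :
    ∑ b, ((PMF.pure a) b).toReal * g b = g a := by
  have : ∀ b, ((PMF.pure a) b).toReal * g b = if b = a then g b else 0 := by
    intro b
    rw [PMF.pure_apply]
    split_ifs <;> simp
  simp_rw [this]
  simp

lemma pmf_exp_map {α β : Type*} [Fintype α] [Fintype β] [DecidableEq β] (p : PMF α)
    (h : α → β) (g : β → ℝ) :
    ∑ b, ((p.map h) b).toReal * g b = ∑ a, (p a).toReal * g (h a) := by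
  rw [PMF.map, pmf_exp_bind]
  exact Finset.sum_congr rfl fun a _ => by rw [Function.comp_apply, pmf_exp_pure]

lemma pmf_exp_uniform {α : Type*} [Fintype α] (Ω : Finset α) (h : Ω.Nonempty) (g : α → ℝ) :
    ∑ a, ((PMF.uniformOfFinset Ω h) a).toReal * g a = (Ω.card : ℝ)⁻¹ * ∑ a ∈ Ω, g a := by
  classical
  have : ∀ a, ((PMF.uniformOfFinset Ω h) a).toReal * g a
      = if a ∈ Ω then (Ω.card : ℝ)⁻¹ * g a else 0 := by
    intro a
    rw [PMF.uniformOfFinset_apply]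
    split_ifs <;> simp
  simp_rw [this]
  rw [Finset.sum_ite_mem, Finset.univ_inter, Finset.mul_sum]

lemma pmf_sum_one {α : Type*} [Fintype α] (p : PMF α) : ∑ a, (p a).toReal = 1 := by
  have := p.tsum_coe
  rw [tsum_fintype] at this
  rw [← ENNReal.toReal_sum (fun a _ => PMF.apply_ne_top p a)]
  · rw [this]; rfl

lemma sg_card {V : Type*} [Fintype V] [DecidableEq V] (sel : Finset V → Finset V → V)
    (s : ℕ) (hs1 : 1 ≤ s)
    (hselmem : ∀ R S : Finset V, R.Nonempty → sel R S ∈ R) :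
    ∀ l, l ≤ Fintype.card V → ∀ S, (stochasticGreedy sel s l) S ≠ 0 → S.card = l := by
  intro l
  induction l with
  | zero =>
    intro _ S hS
    rw [stochasticGreedy, PMF.pure_apply] at hS
    split_ifs at hS with h
    · rw [h, Finset.card_empty]
    · exact absurd rfl hS
  | succ l ih =>
    intro hl T hT
    rw [stochasticGreedy] at hT
    have hT' : T ∈ (((stochasticGreedy sel s l).bind fun S =>
        (PMF.uniformOfFinset _ (Finset.powersetCard_nonempty.mpr (min_le_right s
          ((Finset.univ : Finset V) \ S).card))).map
          fun R => insert (sel R S) S)).support := hT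
    rw [PMF.mem_support_bind_iff] at hT'
    obtain ⟨S, hS, hTm⟩ := hT'
    rw [PMF.mem_support_map_iff] at hTm
    obtain ⟨R, hR, hRT⟩ := hTm
    rw [PMF.support_uniformOfFinset, Finset.mem_coe, Finset.mem_powersetCard] at hR
    have hScard : S.card = l := ih (by omega) S ((PMF.mem_support_iff _ _).1 hS)
    have hWcard : ((Finset.univ : Finset V) \ S).card = Fintype.card V - l := by
      rw [Finset.card_sdiff_of_subset (Finset.subset_univ S), Finset.card_univ, hScard]
    have hRne : R.Nonempty := by
      rw [← Finset.card_pos, hR.2, hWcard]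
      omega
    have hselR := hselmem R S hRne
    have hnotS : sel R S ∉ S := by
      have := hR.1 hselR
      rw [Finset.mem_sdiff] at this
      exact this.2
    rw [← hRT, Finset.card_insert_of_notMem hnotS, hScard]

open Finset in
lemma step_bound {V : Type*} [Fintype V] [DecidableEq V] (f : Finset V → ℝ)
    (hmono : ∀ A B : Finset V, A ⊆ B → f A ≤ f B)
    (hsub : ∀ A B : Finset V, A ⊆ B → ∀ v ∉ B,
        f (insert v B) - f B ≤ f (insert v A) - f A)
    (k : ℕ) (hk : 1 ≤ k) (ε : ℝ) (hε0 : 0 < ε) (hε1 : ε < 1) (s : ℕ)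
    (hsk : ((Fintype.card V : ℝ)) * Real.log (1/ε) ≤ (s : ℝ) * k)
    (sel : Finset V → Finset V → V)
    (hsel : ∀ R S : Finset V, R.Nonempty →
        sel R S ∈ R ∧
        ∀ u ∈ R, f (insert u S) - f S ≤ f (insert (sel R S) S) - f S)
    (Sstar : Finset V) (hSstar : Sstar.card = k)
    (S : Finset V) (hS : S.card < k) :
    f S + (1 - ε)/k * (f Sstar - f S)
      ≤ (((Finset.univ : Finset V) \ S).card.choose
            (min s ((Finset.univ : Finset V) \ S).card) : ℝ)⁻¹
          * ∑ R ∈ powersetCard (min s ((Finset.univ : Finset V) \ S).card)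
              ((Finset.univ : Finset V) \ S), f (insert (sel R S) S) := by
  classical
  set W := (Finset.univ : Finset V) \ S with hW
  set m := min s W.card with hm
  set Δ : V → ℝ := fun u => f (insert u S) - f S with hΔ
  have hΔ0 : ∀ u, 0 ≤ Δ u := fun u => sub_nonneg.2 (hmono _ _ (Finset.subset_insert u S))
  have hCpos : (0:ℝ) < (W.card.choose m : ℝ) := by
    exact_mod_cast Nat.choose_pos (min_le_right s W.card)
  have hΩcard : (powersetCard m W).card = W.card.choose m := Finset.card_powersetCard m W
  set D := Sstar \ S with hD
  have hDW : D ⊆ W := by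
    intro u hu
    rw [hD, Finset.mem_sdiff] at hu
    rw [hW, Finset.mem_sdiff]
    exact ⟨Finset.mem_univ u, hu.2⟩
  have hterm : ∀ R ∈ powersetCard m W, f S ≤ f (insert (sel R S) S) :=
    fun R _ => hmono _ _ (Finset.subset_insert _ S)
  rcases Finset.eq_empty_or_nonempty D with hDe | hDne
  · -- Sstar ⊆ S
    have hfS : f Sstar ≤ f S := hmono _ _ (by
      intro u hu
      by_contra hus
      exact (Finset.notMem_empty u) (hDe ▸ Finset.mem_sdiff.2 ⟨hu, hus⟩))
    have h1 : f S + (1 - ε)/k * (f Sstar - f S) ≤ f S := by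
      have hc : 0 ≤ (1 - ε)/k := div_nonneg (by linarith) (by positivity)
      nlinarith
    have h2 : f S ≤ ((W.card.choose m : ℝ))⁻¹
        * ∑ R ∈ powersetCard m W, f (insert (sel R S) S) := by
      have := Finset.sum_le_sum hterm
      rw [Finset.sum_const, hΩcard, nsmul_eq_mul] at this
      rw [le_inv_mul_iff₀ hCpos]
      exact this
    linarith
  · have hd : 1 ≤ D.card := Finset.card_pos.2 hDne
    have hdk : D.card ≤ k := hSstar ▸ Finset.card_le_card (hD ▸ Finset.sdiff_subset)
    have hWn : (W.card : ℝ) * Real.log (1/ε) ≤ (s : ℝ) * k := by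
      have hWle : (W.card : ℝ) ≤ (Fintype.card V : ℝ) := by
        exact_mod_cast Finset.card_le_card (Finset.subset_univ W)
      have hlogpos : 0 < Real.log (1/ε) := by
        apply Real.log_pos
        rw [one_div]
        exact (one_lt_inv₀ hε0).2 hε1
      nlinarith
    have hhit := hit_bound W D hDW hd s k hk hdk ε hε0 hε1 hWn
    -- sum over Ω of gains
    have hgain : ∀ R ∈ (powersetCard m W).filter (fun R => (R ∩ D).Nonempty),
        (((R ∩ D).card : ℝ)⁻¹ * ∑ u ∈ R ∩ D, Δ u) ≤ Δ (sel R S) := by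
      intro R hR
      rw [Finset.mem_filter] at hR
      have hRne : R.Nonempty := Finset.Nonempty.mono Finset.inter_subset_left hR.2
      have hselR := hsel R S hRne
      have hub : ∀ u ∈ R ∩ D, Δ u ≤ Δ (sel R S) := fun u hu =>
        hselR.2 u (Finset.mem_inter.1 hu).1
      have hsum : ∑ u ∈ R ∩ D, Δ u ≤ ((R ∩ D).card : ℝ) * Δ (sel R S) := by
        calc ∑ u ∈ R ∩ D, Δ u ≤ ∑ _u ∈ R ∩ D, Δ (sel R S) := Finset.sum_le_sum hub
          _ = ((R ∩ D).card : ℝ) * Δ (sel R S) := by rw [Finset.sum_const, nsmul_eq_mul]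
      have hcpos : (0:ℝ) < ((R ∩ D).card : ℝ) := by
        exact_mod_cast Finset.card_pos.2 hR.2
      rw [inv_mul_le_iff₀ hcpos]
      linarith [hsum]
    have hsum1 : ((((powersetCard m W).filter (fun R => (R ∩ D).Nonempty)).card : ℝ))
          * ((D.card : ℝ)⁻¹ * ∑ u ∈ D, Δ u)
        ≤ ∑ R ∈ powersetCard m W, Δ (sel R S) := by
      rw [← avg_eq W D hDW hd m Δ]
      calc ∑ R ∈ (powersetCard m W).filter (fun R => (R ∩ D).Nonempty),
            (((R ∩ D).card : ℝ)⁻¹ * ∑ u ∈ R ∩ D, Δ u)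
          ≤ ∑ R ∈ (powersetCard m W).filter (fun R => (R ∩ D).Nonempty), Δ (sel R S) :=
            Finset.sum_le_sum hgain
        _ ≤ ∑ R ∈ powersetCard m W, Δ (sel R S) := by
            apply Finset.sum_le_sum_of_subset_of_nonneg (Finset.filter_subset _ _)
            intro R _ _
            exact hΔ0 _
    -- telescoping
    have htel : f Sstar - f S ≤ ∑ u ∈ D, Δ u := by
      have h1 : f Sstar ≤ f (S ∪ Sstar) := hmono _ _ Finset.subset_union_right
      have h2 := telescope_sub f hmono hsub S Sstar
      have h3 : ∑ u ∈ Sstar, Δ u = ∑ u ∈ D, Δ u := by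
        symm
        apply Finset.sum_subset (hD ▸ Finset.sdiff_subset)
        intro u hu hunotD
        have huS : u ∈ S := by
          by_contra h
          exact hunotD (hD ▸ Finset.mem_sdiff.2 ⟨hu, h⟩)
        rw [hΔ]
        simp [Finset.insert_eq_self.2 huS]
      rw [hΔ] at h3 ⊢
      rw [h3] at h2
      linarith
    have hΔD0 : 0 ≤ ∑ u ∈ D, Δ u := Finset.sum_nonneg fun u _ => hΔ0 u
    -- probability bound
    have hx0 : (0:ℝ) ≤ (D.card : ℝ)/k := by positivity
    have hx1 : (D.card : ℝ)/k ≤ 1 := by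
      rw [div_le_one (by exact_mod_cast hk : (0:ℝ) < (k:ℝ))]
      exact_mod_cast hdk
    have hexp := exp_mul_log_le hε0 hx0 hx1
    -- combine
    have hdposR : (0:ℝ) < (D.card : ℝ) := by exact_mod_cast hd
    have hkposR : (0:ℝ) < (k : ℝ) := by exact_mod_cast hk
    have hchain : (1 - ε)/k * (f Sstar - f S)
        ≤ ((((powersetCard m W).filter (fun R => (R ∩ D).Nonempty)).card : ℝ))
            * ((W.card.choose m : ℝ))⁻¹ * ((D.card : ℝ)⁻¹ * ∑ u ∈ D, Δ u) := by
      have hP : (1 - ε) * ((D.card : ℝ)/k)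
          ≤ ((((powersetCard m W).filter (fun R => (R ∩ D).Nonempty)).card : ℝ))
            * ((W.card.choose m : ℝ))⁻¹ := by
        have : 1 - Real.exp ((D.card : ℝ)/k * Real.log ε) ≥ (1 - ε) * ((D.card : ℝ)/k) := by
          linarith [hexp]
        linarith [hhit]
      calc (1 - ε)/k * (f Sstar - f S)
          ≤ (1 - ε)/k * ∑ u ∈ D, Δ u := by
            apply mul_le_mul_of_nonneg_left htel (div_nonneg (by linarith) (by positivity))
        _ = ((1 - ε) * ((D.card : ℝ)/k)) * ((D.card : ℝ)⁻¹ * ∑ u ∈ D, Δ u) := by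
            field_simp
        _ ≤ ((((powersetCard m W).filter (fun R => (R ∩ D).Nonempty)).card : ℝ))
            * ((W.card.choose m : ℝ))⁻¹ * ((D.card : ℝ)⁻¹ * ∑ u ∈ D, Δ u) := by
            apply mul_le_mul_of_nonneg_right hP (by positivity)
    -- final assembly
    have hfinal : ((W.card.choose m : ℝ))⁻¹ * ∑ R ∈ powersetCard m W, f (insert (sel R S) S)
        = f S + ((W.card.choose m : ℝ))⁻¹ * ∑ R ∈ powersetCard m W, Δ (sel R S) := by
      have : ∀ R ∈ powersetCard m W, f (insert (sel R S) S) = f S + Δ (sel R S) := by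
        intro R _
        rw [hΔ]
        ring
      rw [Finset.sum_congr rfl this, Finset.sum_add_distrib, Finset.sum_const, hΩcard,
        nsmul_eq_mul, mul_add]
      field_simp
    rw [hfinal]
    have hlast : (1 - ε)/k * (f Sstar - f S)
        ≤ ((W.card.choose m : ℝ))⁻¹ * ∑ R ∈ powersetCard m W, Δ (sel R S) := by
      calc (1 - ε)/k * (f Sstar - f S)
          ≤ ((((powersetCard m W).filter (fun R => (R ∩ D).Nonempty)).card : ℝ))
              * ((W.card.choose m : ℝ))⁻¹ * ((D.card : ℝ)⁻¹ * ∑ u ∈ D, Δ u) := hchain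
        _ = ((W.card.choose m : ℝ))⁻¹
              * (((((powersetCard m W).filter (fun R => (R ∩ D).Nonempty)).card : ℝ))
                * ((D.card : ℝ)⁻¹ * ∑ u ∈ D, Δ u)) := by ring
        _ ≤ ((W.card.choose m : ℝ))⁻¹ * ∑ R ∈ powersetCard m W, Δ (sel R S) := by
            apply mul_le_mul_of_nonneg_left hsum1 (by positivity)
    linarith

/-- Mirzasoleiman et al.: stochastic greedy with sample size
`s = ⌈(n/k) · log (1/ε)⌉` satisfies
`E[f (S k)] ≥ (1 - 1/e - ε) * max { f S : |S| = k }`. -/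
theorem stochastic_greedy_guarantee
    {V : Type*} [Fintype V] [DecidableEq V] (f : Finset V → ℝ)
    (hnonneg : ∀ A : Finset V, 0 ≤ f A)
    (hmono : ∀ A B : Finset V, A ⊆ B → f A ≤ f B)
    (hsub : ∀ A B : Finset V, A ⊆ B → ∀ v ∉ B,
        f (insert v B) - f B ≤ f (insert v A) - f A)
    (hf0 : f ∅ = 0)
    (k : ℕ) (hk1 : 1 ≤ k) (hkn : k ≤ Fintype.card V)
    (ε : ℝ) (hε0 : 0 < ε) (hε1 : ε < 1)
    (s : ℕ) (hs : s = ⌈((Fintype.card V : ℝ) / k) * Real.log (1 / ε)⌉₊)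
    (sel : Finset V → Finset V → V)
    (hsel : ∀ R S : Finset V, R.Nonempty →
        sel R S ∈ R ∧
        ∀ u ∈ R, f (insert u S) - f S ≤ f (insert (sel R S) S) - f S) :
    (1 - (Real.exp 1)⁻¹ - ε) *
        (Finset.powersetCard k (Finset.univ : Finset V)).sup'
          (Finset.powersetCard_nonempty.mpr (by simpa using hkn)) f
      ≤ ∑ T : Finset V, (stochasticGreedy sel s k T).toReal * f T := by
  classical
  set n := Fintype.card V with hn
  have hn1 : 1 ≤ n := le_trans hk1 hkn
  have hkR : (0:ℝ) < (k:ℝ) := by exact_mod_cast hk1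
  have hnR : (0:ℝ) < (n:ℝ) := by exact_mod_cast hn1
  have hlogpos : 0 < Real.log (1/ε) := by
    apply Real.log_pos
    rw [one_div]
    exact (one_lt_inv₀ hε0).2 hε1
  have hs1 : 1 ≤ s := by
    rw [hs]
    rw [Nat.one_le_iff_ne_zero, ← Nat.pos_iff_ne_zero, Nat.ceil_pos]
    positivity
  have hsk : ((n : ℝ)) * Real.log (1/ε) ≤ (s : ℝ) * k := by
    have hceil : ((n : ℝ) / k) * Real.log (1 / ε) ≤ (s : ℝ) := by
      rw [hs]; exact Nat.le_ceil _
    calc (n : ℝ) * Real.log (1/ε) = (((n : ℝ) / k) * Real.log (1 / ε)) * k := by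
          field_simp
      _ ≤ (s : ℝ) * k := mul_le_mul_of_nonneg_right hceil (le_of_lt hkR)
  -- optimal set
  have hne : (Finset.powersetCard k (Finset.univ : Finset V)).Nonempty :=
    Finset.powersetCard_nonempty.mpr (by simpa using hkn)
  obtain ⟨Sstar, hSmem, hSeq⟩ := Finset.exists_mem_eq_sup' hne f
  have hSstar : Sstar.card = k := (Finset.mem_powersetCard.1 hSmem).2
  have hOPT0 : 0 ≤ f Sstar := hnonneg Sstar
  set c : ℝ := (1 - ε)/k with hc
  have hc0 : 0 ≤ c := div_nonneg (by linarith) (le_of_lt hkR)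
  have hc1 : c ≤ 1 := by
    rw [hc, div_le_one hkR]
    have : (1:ℝ) ≤ (k:ℝ) := by exact_mod_cast hk1
    linarith
  set Ex : ℕ → ℝ := fun l => ∑ T, ((stochasticGreedy sel s l) T).toReal * f T with hEx
  have hEx0 : Ex 0 = 0 := by
    rw [hEx]
    show ∑ T, ((stochasticGreedy sel s 0) T).toReal * f T = 0
    rw [show stochasticGreedy sel s 0 = (PMF.pure ∅ : PMF (Finset V)) from rfl]
    rw [pmf_exp_pure]
    exact hf0
  -- recursion
  have hrec : ∀ l, l < k → f Sstar - Ex (l+1) ≤ (1 - c) * (f Sstar - Ex l) := by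
    intro l hlk
    have hstep : stochasticGreedy sel s (l+1) = (stochasticGreedy sel s l).bind fun S =>
        (PMF.uniformOfFinset
            (Finset.powersetCard (min s ((Finset.univ : Finset V) \ S).card)
              ((Finset.univ : Finset V) \ S))
            (Finset.powersetCard_nonempty.mpr (min_le_right _ _))).map
          fun R => insert (sel R S) S := rfl
    have hExs : Ex (l+1) = ∑ S, ((stochasticGreedy sel s l) S).toReal *
        ((((Finset.univ : Finset V) \ S).card.choose
            (min s ((Finset.univ : Finset V) \ S).card) : ℝ)⁻¹
          * ∑ R ∈ Finset.powersetCard (min s ((Finset.univ : Finset V) \ S).card)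
              ((Finset.univ : Finset V) \ S), f (insert (sel R S) S)) := by
      rw [hEx]
      show ∑ T, ((stochasticGreedy sel s (l+1)) T).toReal * f T = _
      rw [hstep, pmf_exp_bind]
      apply Finset.sum_congr rfl
      intro S _
      congr 1
      rw [pmf_exp_map, pmf_exp_uniform, Finset.card_powersetCard]
    have hbound : ∀ S : Finset V,
        ((stochasticGreedy sel s l) S).toReal * (f S + c * (f Sstar - f S))
          ≤ ((stochasticGreedy sel s l) S).toReal *
            ((((Finset.univ : Finset V) \ S).card.choose
                (min s ((Finset.univ : Finset V) \ S).card) : ℝ)⁻¹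
              * ∑ R ∈ Finset.powersetCard (min s ((Finset.univ : Finset V) \ S).card)
                  ((Finset.univ : Finset V) \ S), f (insert (sel R S) S)) := by
      intro S
      rcases eq_or_ne ((stochasticGreedy sel s l) S) 0 with h0 | h0
      · rw [h0]; simp
      · have hScard : S.card = l := sg_card sel s hs1
          (fun R S hR => (hsel R S hR).1) l (by omega) S h0
        apply mul_le_mul_of_nonneg_left _ ENNReal.toReal_nonneg
        exact step_bound f hmono hsub k hk1 ε hε0 hε1 s hsk sel hsel Sstar hSstar S
          (by omega)
    have hEsum : ∑ S, ((stochasticGreedy sel s l) S).toReal * (f S + c * (f Sstar - f S))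
        = Ex l + c * (f Sstar - Ex l) := by
      have hone := pmf_sum_one (stochasticGreedy sel s l)
      rw [hEx]
      simp only []
      rw [Finset.sum_congr rfl (fun S _ => by
        ring : ∀ S ∈ Finset.univ, ((stochasticGreedy sel s l) S).toReal * (f S + c * (f Sstar - f S))
          = ((stochasticGreedy sel s l) S).toReal * f S * (1 - c)
            + ((stochasticGreedy sel s l) S).toReal * (c * f Sstar))]
      rw [Finset.sum_add_distrib, ← Finset.sum_mul, ← Finset.sum_mul]
      rw [hone]
      ring
    have : Ex l + c * (f Sstar - Ex l) ≤ Ex (l+1) := by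
      rw [hExs, ← hEsum]
      exact Finset.sum_le_sum fun S _ => hbound S
    linarith
  -- iterate
  have hiter : ∀ j, j ≤ k → f Sstar - Ex j ≤ (1 - c)^j * f Sstar := by
    intro j
    induction j with
    | zero => intro _; rw [hEx0]; simp
    | succ j ih =>
      intro hjk
      have h1 := hrec j (by omega)
      have h2 := ih (by omega)
      calc f Sstar - Ex (j+1) ≤ (1 - c) * (f Sstar - Ex j) := h1
        _ ≤ (1 - c) * ((1 - c)^j * f Sstar) := by
            apply mul_le_mul_of_nonneg_left h2 (by linarith)
        _ = (1 - c)^(j+1) * f Sstar := by ring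
  have hfinal := hiter k le_rfl
  -- (1-c)^k ≤ exp (ε - 1)
  have hpow : (1 - c)^k ≤ Real.exp (ε - 1) := by
    have h1 : 1 - c ≤ Real.exp (-c) := by
      have := Real.add_one_le_exp (-c)
      linarith
    have h0 : (0:ℝ) ≤ 1 - c := by linarith
    calc (1 - c)^k ≤ (Real.exp (-c))^k := pow_le_pow_left₀ h0 h1 k
      _ = Real.exp ((k:ℝ) * (-c)) := by rw [← Real.exp_nat_mul]
      _ = Real.exp (ε - 1) := by
          congr 1
          rw [hc]
          field_simp
          ring
  have hexp := exp_eps_sub_one (le_of_lt hε0) (le_of_lt hε1)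
  have hkey : f Sstar - Ex k ≤ ((Real.exp 1)⁻¹ + ε) * f Sstar := by
    calc f Sstar - Ex k ≤ (1 - c)^k * f Sstar := hfinal
      _ ≤ ((Real.exp 1)⁻¹ + ε) * f Sstar := by
          apply mul_le_mul_of_nonneg_right _ hOPT0
          linarith
  show (1 - (Real.exp 1)⁻¹ - ε) *
      (Finset.powersetCard k (Finset.univ : Finset V)).sup' hne f ≤ Ex k
  rw [hSeq]
  nlinarith
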